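/- Let 0 → E' → E → E'' → 0 be an exact sequence of X-filtered R-modules with both maps bicontrolled. If both E' and E'' are insular, then E is insular. -/

import Mathlib

open Metric Set

/-- The closed metric `r`-enlargement of a subset `S` of a metric space. -/
def enl {X : Type*} [PseudoMetricSpace X] (S : Set X) (r : ℝ) : Set X :=
  {x | ∃ s ∈ S, dist x s ≤ r}

section Defs

variable {X : Type*} [PseudoMetricSpace X] (R : Type*) [Ring R]

/-- An `X`-filtered `R`-module structure on `M`: a monotone assignment of submodules
with `F ∅ = ⊥` and `F X` being the whole module. -/
def IsXFiltration {M : Type*} [AddCommGroup M] [Module R M]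
    (F : Set X → Submodule R M) : Prop :=
  Monotone F ∧ F ∅ = ⊥ ∧ F Set.univ = ⊤

/-- `F` is `D`-lean: `F(S) ⊆ ∑_{x ∈ S} F(x[D])` for every `S ⊆ X`. -/
def IsLean {M : Type*} [AddCommGroup M] [Module R M]
    (F : Set X → Submodule R M) (D : ℝ) : Prop :=
  ∀ S : Set X, F S ≤ ⨆ x ∈ S, F (closedBall x D)

/-- `F` is `δ`-scattered: `F(X) ⊆ ∑_{x ∈ X} F(x[δ])`. -/
def IsScattered {M : Type*} [AddCommGroup M] [Module R M]
    (F : Set X → Submodule R M) (δ : ℝ) : Prop :=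
  F Set.univ ≤ ⨆ x : X, F (closedBall x δ)

/-- `F` is `d`-insular: `F(S) ∩ F(U) ⊆ F(S[d] ∩ U[d])` for all `S, U ⊆ X`. -/
def IsInsular {M : Type*} [AddCommGroup M] [Module R M]
    (F : Set X → Submodule R M) (d : ℝ) : Prop :=
  ∀ S U : Set X, F S ⊓ F U ≤ F (enl S d ∩ enl U d)

/-- `F` is locally finitely generated: `F(T)` is a finitely generated `R`-module
for every bounded `T ⊆ X`. -/
def IsLocallyFG {M : Type*} [AddCommGroup M] [Module R M]
    (F : Set X → Submodule R M) : Prop :=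
  ∀ T : Set X, Bornology.IsBounded T → (F T).FG

/-- `f` is `b`-bicontrolled: `f(F(S)) ⊆ G(S[b])` and `f(F(X)) ∩ G(S) ⊆ f(F(S[b]))`
for all `S ⊆ X`. -/
def IsBicontrolled {M N : Type*} [AddCommGroup M] [Module R M]
    [AddCommGroup N] [Module R N]
    (F : Set X → Submodule R M) (G : Set X → Submodule R N)
    (f : M →ₗ[R] N) (b : ℝ) : Prop :=
  (∀ S : Set X, (F S).map f ≤ G (enl S b)) ∧
  (∀ S : Set X, (F Set.univ).map f ⊓ G S ≤ (F (enl S b)).map f)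

end Defs

section Aux

variable {X : Type*} [PseudoMetricSpace X]

lemma enl_mono_set {S T : Set X} (h : S ⊆ T) (r : ℝ) : enl S r ⊆ enl T r :=
  fun _ ⟨s, hs, hd⟩ => ⟨s, h hs, hd⟩

lemma enl_mono_rad (S : Set X) {r r' : ℝ} (h : r ≤ r') : enl S r ⊆ enl S r' :=
  fun _ ⟨s, hs, hd⟩ => ⟨s, hs, hd.trans h⟩

lemma subset_enl (S : Set X) {r : ℝ} (hr : 0 ≤ r) : S ⊆ enl S r :=
  fun x hx => ⟨x, hx, by simpa using hr⟩

lemma enl_enl (S : Set X) (a c : ℝ) : enl (enl S a) c ⊆ enl S (a + c) := by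
  rintro x ⟨s, ⟨t, ht, hts⟩, hd⟩
  exact ⟨t, ht, by calc dist x t ≤ dist x s + dist s t := dist_triangle _ _ _
                   _ ≤ a + c := by linarith⟩

lemma enl_inter (A B : Set X) (r : ℝ) : enl (A ∩ B) r ⊆ enl A r ∩ enl B r :=
  fun _ ⟨s, hs, hd⟩ => ⟨⟨s, hs.1, hd⟩, ⟨s, hs.2, hd⟩⟩

end Aux

/-- in an exact sequence of `X`-filtered modules with bicontrolled maps,
if `E'` and `E''` are insular then `E` is insular. -/
theorem insular_of_extension
    {X : Type*} [PseudoMetricSpace X] (R : Type*) [Ring R]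
    {M' M M'' : Type*} [AddCommGroup M'] [Module R M'] [AddCommGroup M] [Module R M]
    [AddCommGroup M''] [Module R M'']
    (E' : Set X → Submodule R M') (E : Set X → Submodule R M)
    (E'' : Set X → Submodule R M'') (f : M' →ₗ[R] M) (g : M →ₗ[R] M'')
    (hE' : IsXFiltration R E') (hE : IsXFiltration R E) (hE'' : IsXFiltration R E'')
    (hinj : Function.Injective f) (hsurj : Function.Surjective g)
    (hexact : LinearMap.range f = LinearMap.ker g)
    (b : ℝ) (hb : 0 ≤ b)
    (hf : IsBicontrolled R E' E f b) (hg : IsBicontrolled R E E'' g b)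
    (d' d'' : ℝ) (hd' : 0 ≤ d') (hd'' : 0 ≤ d'')
    (hins' : IsInsular R E' d') (hins'' : IsInsular R E'' d'') :
    ∃ d : ℝ, 0 ≤ d ∧ IsInsular R E d := by
  refine ⟨4*b + d' + d'', by linarith, ?_⟩
  intro S U x hx
  obtain ⟨hxS, hxU⟩ := hx
  have hEmono := hE.1
  have hxuniv : x ∈ E Set.univ := by rw [hE.2.2]; trivial
  -- push through g
  have h1 : g x ∈ E'' (enl S b) := hg.1 S ⟨x, hxS, rfl⟩
  have h2 : g x ∈ E'' (enl U b) := hg.1 U ⟨x, hxU, rfl⟩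
  have h3 := hins'' _ _ ⟨h1, h2⟩
  -- pull back via g's reverse control
  have h4 : g x ∈ (E (enl (enl (enl S b) d'' ∩ enl (enl U b) d'') b)).map g :=
    hg.2 _ ⟨⟨x, hxuniv, rfl⟩, h3⟩
  obtain ⟨y, hy, hgy⟩ := h4
  -- y ∈ E (enl S (2b+d'')) and E (enl U (2b+d''))
  have hsub : ∀ V : Set X, enl (enl (enl S b) d'' ∩ enl (enl U b) d'') b ⊆
      enl V (2*b + d'') → y ∈ E (enl V (2*b + d'')) := fun V h => hEmono h hy
  have hyS : y ∈ E (enl S (2*b + d'')) := hsub S <| by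
    intro z hz
    have h1 := enl_mono_set (enl_enl S b d'') b (enl_inter _ _ b hz).1
    have h2 := enl_enl S (b + d'') b h1
    exact enl_mono_rad _ (by linarith) h2
  have hyU : y ∈ E (enl U (2*b + d'')) := hsub U <| by
    intro z hz
    have h1 := enl_mono_set (enl_enl U b d'') b (enl_inter _ _ b hz).2
    have h2 := enl_enl U (b + d'') b h1
    exact enl_mono_rad _ (by linarith) h2
  -- x - y ∈ range f
  have hker : x - y ∈ LinearMap.range f := by
    rw [hexact, LinearMap.mem_ker, map_sub, hgy, sub_self]
  -- x - y ∈ E (enl S (2b+d'')) ∩ E (enl U (2b+d''))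
  have hxS' : x ∈ E (enl S (2*b + d'')) := hEmono (subset_enl S (by linarith)) hxS
  have hxU' : x ∈ E (enl U (2*b + d'')) := hEmono (subset_enl U (by linarith)) hxU
  have hdS : x - y ∈ E (enl S (2*b + d'')) := sub_mem hxS' hyS
  have hdU : x - y ∈ E (enl U (2*b + d'')) := sub_mem hxU' hyU
  have hxy_univ : x - y ∈ (E' Set.univ).map f := by
    rw [hE'.2.2, Submodule.map_top]; exact hker
  -- pull back via f's reverse control, twice
  obtain ⟨z₁, hz₁, hfz₁⟩ := hf.2 _ ⟨hxy_univ, hdS⟩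
  obtain ⟨z₂, hz₂, hfz₂⟩ := hf.2 _ ⟨hxy_univ, hdU⟩
  have hzz : z₁ = z₂ := hinj (by rw [hfz₁, hfz₂])
  subst hzz
  -- E'-insularity
  have h5 := hins' _ _ ⟨hz₁, hz₂⟩
  -- push forward via f
  have h6 : x - y ∈ E (enl (enl (enl (enl S (2*b + d'')) b) d' ∩
      enl (enl (enl U (2*b + d'')) b) d') b) := by
    rw [← hfz₁]; exact hf.1 _ ⟨z₁, h5, rfl⟩
  set D := 4*b + d' + d'' with hD
  have h7 : x - y ∈ E (enl S D ∩ enl U D) := by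
    refine hEmono ?_ h6
    intro z hz
    have hz' := enl_inter _ _ b hz
    constructor
    · have h1 := enl_mono_set (enl_enl (enl S (2*b+d'')) b d') b hz'.1
      have h2 := enl_enl (enl S (2*b+d'')) (b + d') b h1
      have h3 := enl_enl S (2*b+d'') ((b+d')+b) h2
      exact enl_mono_rad _ (by rw [hD]; linarith) h3
    · have h1 := enl_mono_set (enl_enl (enl U (2*b+d'')) b d') b hz'.2
      have h2 := enl_enl (enl U (2*b+d'')) (b + d') b h1
      have h3 := enl_enl U (2*b+d'') ((b+d')+b) h2
      exact enl_mono_rad _ (by rw [hD]; linarith) h3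
  have hy' : y ∈ E (enl S D ∩ enl U D) := by
    refine hEmono ?_ hy
    intro z hz
    have hz' := enl_inter _ _ b hz
    constructor
    · have h1 := enl_mono_set (enl_enl S b d'') b hz'.1
      have h2 := enl_enl S (b + d'') b h1
      exact enl_mono_rad _ (by rw [hD]; linarith) h2
    · have h1 := enl_mono_set (enl_enl U b d'') b hz'.2
      have h2 := enl_enl U (b + d'') b h1
      exact enl_mono_rad _ (by rw [hD]; linarith) h2
  have : x = (x - y) + y := by abel
  rw [this]
  exact add_mem h7 hy'
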